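/- Let x ∈ ℝⁿ be such that the flow S_t x is defined and f(S_t x) ≠ 0 for all t ≥ 0, and define Ã(t,x) := Df(S_t x) − (f(S_t x) f(S_t x)^T/‖f(S_t x)‖²)(Df(S_t x)^T + Df(S_t x)). If φ is a solution of the variational equation φ̇(t) = Df(S_t x)φ(t), then ψ(t) := P_{S_t x} φ(t) satisfies ψ̇(t) = Ã(t,x) ψ(t) for all t ≥ 0. -/

import Mathlib

open Matrix Set Filter MeasureTheory

/-- Euclidean norm of a vector in `ℝⁿ`. -/
noncomputable def enorm' {n : ℕ} (v : Fin n → ℝ) : ℝ := Real.sqrt (∑ i, v i ^ 2)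

/-- Operator norm of a matrix induced by the Euclidean norm. -/
noncomputable def opn {n : ℕ} (A : Matrix (Fin n) (Fin n) ℝ) : ℝ :=
  ‖Matrix.toEuclideanCLM (𝕜 := ℝ) A‖

/-- The projection `P_x = I - f(x)f(x)ᵀ/‖f(x)‖²` onto the hyperplane perpendicular to `f(x)`. -/
noncomputable def Pm {n : ℕ} (f : (Fin n → ℝ) → Fin n → ℝ) (x : Fin n → ℝ) :
    Matrix (Fin n) (Fin n) ℝ :=
  1 - (enorm' (f x) ^ 2)⁻¹ • Matrix.vecMulVec (f x) (f x)

/-- The differential operator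
`LM(x) = M′(x) + Df(x)ᵀM(x) + M(x)Df(x) - M(x)f(x)f(x)ᵀ(Df(x)+Df(x)ᵀ)/‖f(x)‖²
  - (Df(x)+Df(x)ᵀ)f(x)f(x)ᵀM(x)/‖f(x)‖²`,
where the orbital derivative `M′(x)` has entries `∇M_ij(x) ⋅ f(x)`. -/
noncomputable def LMop {n : ℕ} (f : (Fin n → ℝ) → Fin n → ℝ)
    (Df M : (Fin n → ℝ) → Matrix (Fin n) (Fin n) ℝ) (x : Fin n → ℝ) :
    Matrix (Fin n) (Fin n) ℝ :=
  (Matrix.of fun i j => fderiv ℝ (fun y => M y i j) x (f x))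
    + (Df x)ᵀ * M x + M x * Df x
    - (enorm' (f x) ^ 2)⁻¹ • (M x * Matrix.vecMulVec (f x) (f x) * (Df x + (Df x)ᵀ))
    - (enorm' (f x) ^ 2)⁻¹ • ((Df x + (Df x)ᵀ) * Matrix.vecMulVec (f x) (f x) * M x)

lemma vecMulVec_mulVec' {n : ℕ} (u v w : Fin n → ℝ) :
    (Matrix.vecMulVec u v).mulVec w = (v ⬝ᵥ w) • u := by
  funext i
  simp only [Matrix.mulVec, Matrix.vecMulVec_apply, dotProduct, Pi.smul_apply,
    smul_eq_mul, Finset.sum_mul]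
  exact Finset.sum_congr rfl fun j _ => by ring

/-- if `φ` solves the variational equation `φ̇(t) = Df(S_t x)φ(t)`, then
`ψ(t) := P_{S_t x} φ(t)` solves `ψ̇(t) = Ã(t,x) ψ(t)` where
`Ã(t,x) = Df(S_t x) − (f(S_t x)f(S_t x)ᵀ/‖f(S_t x)‖²)(Df(S_t x)ᵀ + Df(S_t x))`. -/
theorem stmt16 {n : ℕ} (f : (Fin n → ℝ) → Fin n → ℝ)
    (Df : (Fin n → ℝ) → Matrix (Fin n) (Fin n) ℝ)
    (hf : ContDiff ℝ 1 f)
    (hDf : ∀ y, HasFDerivAt f (LinearMap.toContinuousLinearMap ((Df y).mulVecLin)) y)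
    (x : Fin n → ℝ)
    -- `g t = S_t x` is the forward trajectory through `x`
    (g : ℝ → Fin n → ℝ) (hg0 : g 0 = x)
    (hg : ∀ t ≥ (0:ℝ), HasDerivWithinAt g (f (g t)) (Set.Ici 0) t)
    (hfg : ∀ t ≥ (0:ℝ), f (g t) ≠ 0)
    (Atil : ℝ → Matrix (Fin n) (Fin n) ℝ)
    (hAtil : ∀ t, Atil t = Df (g t) -
      (enorm' (f (g t)) ^ 2)⁻¹ •
        (Matrix.vecMulVec (f (g t)) (f (g t)) * ((Df (g t))ᵀ + Df (g t))))
    (φ : ℝ → Fin n → ℝ)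
    (hφ : ∀ t ≥ (0:ℝ), HasDerivWithinAt φ ((Df (g t)).mulVec (φ t)) (Set.Ici 0) t)
    (ψ : ℝ → Fin n → ℝ) (hψ : ∀ t, ψ t = (Pm f (g t)).mulVec (φ t)) :
    ∀ t ≥ (0:ℝ), HasDerivWithinAt ψ ((Atil t).mulVec (ψ t)) (Set.Ici 0) t := by
  intro t ht
  have hu : f (g t) ≠ 0 := hfg t ht
  -- derivative of τ ↦ f (g τ)
  have hF : HasDerivWithinAt (fun τ => f (g τ)) ((Df (g t)).mulVec (f (g t)))
      (Set.Ici 0) t := by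
    simpa [Function.comp_def] using (hDf (g t)).comp_hasDerivWithinAt t (hg t ht)
  have hFi := hasDerivWithinAt_pi.mp hF
  have hφi := hasDerivWithinAt_pi.mp (hφ t ht)
  -- derivative of s τ = ∑ f(g τ) i * φ τ i
  have hs : HasDerivWithinAt (fun τ => ∑ i, f (g τ) i * φ τ i)
      (∑ i, (((Df (g t)).mulVec (f (g t))) i * φ t i
        + f (g t) i * ((Df (g t)).mulVec (φ t)) i)) (Set.Ici 0) t :=
    HasDerivWithinAt.fun_sum fun i _ => (hFi i).fun_mul (hφi i)
  -- derivative of r τ = ∑ f(g τ) i ^ 2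
  have hr : HasDerivWithinAt (fun τ => ∑ i, f (g τ) i ^ 2)
      (∑ i, (2 : ℕ) * f (g t) i ^ 1 * ((Df (g t)).mulVec (f (g t))) i) (Set.Ici 0) t :=
    HasDerivWithinAt.fun_sum fun i _ => (hFi i).fun_pow 2
  have hrt0 : (∑ i, f (g t) i ^ 2) ≠ 0 := by
    intro h
    apply hu
    funext i
    have := (Finset.sum_eq_zero_iff_of_nonneg
      (fun j _ => sq_nonneg (f (g t) j))).mp h i (Finset.mem_univ i)
    simpa using (pow_eq_zero_iff two_ne_zero).mp this
  have hq := (hr.fun_inv hrt0).fun_mul hs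
  have hψeq : ψ = fun τ => φ τ -
      ((∑ i, f (g τ) i ^ 2)⁻¹ * (∑ i, f (g τ) i * φ τ i)) • f (g τ) := by
    funext τ
    rw [hψ τ, Pm, Matrix.sub_mulVec, Matrix.one_mulVec, Matrix.smul_mulVec,
      vecMulVec_mulVec', smul_smul]
    congr 2
    rw [enorm', Real.sq_sqrt (by positivity)]
    rfl
  have hD := (hφ t ht).fun_sub (hq.fun_smul hF)
  rw [← hψeq] at hD
  refine hD.congr_deriv ?_
  -- now prove the algebraic identity
  have hψt : ψ t = φ t -
      ((∑ i, f (g t) i ^ 2)⁻¹ * (∑ i, f (g t) i * φ t i)) • f (g t) := by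
    rw [hψeq]
  -- abbreviations
  set u := f (g t) with hu'
  set A := Df (g t) with hA'
  set p := φ t with hp'
  set R := ∑ i, u i ^ 2 with hR'
  set S := ∑ i, u i * p i with hS'
  have e1 : ∑ i, ((A.mulVec u) i * p i + u i * (A.mulVec p) i)
      = (A.mulVec u) ⬝ᵥ p + u ⬝ᵥ (A.mulVec p) := by
    simp [dotProduct, Finset.sum_add_distrib]
  have e2 : ∑ i, (2 : ℕ) * u i ^ 1 * (A.mulVec u) i = 2 * (u ⬝ᵥ A.mulVec u) := by
    simp only [dotProduct, Finset.mul_sum, pow_one, Nat.cast_ofNat]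
    exact Finset.sum_congr rfl fun j _ => by ring
  have hS : S = u ⬝ᵥ p := rfl
  rw [hAtil t, hψt]
  rw [show enorm' (f (g t)) ^ 2 = R by rw [enorm', Real.sq_sqrt (by positivity)], ← hu', ← hA']
  rw [Matrix.sub_mulVec, Matrix.smul_mulVec, ← Matrix.mulVec_mulVec,
    vecMulVec_mulVec']
  rw [e1, e2]
  simp only [Matrix.mulVec_sub, Matrix.mulVec_smul, Matrix.add_mulVec]
  have ht1 : ∀ w : Fin n → ℝ, u ⬝ᵥ (Aᵀ.mulVec w) = (A.mulVec u) ⬝ᵥ w := by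
    intro w
    rw [Matrix.dotProduct_mulVec, Matrix.vecMul_transpose]
  have ht2 : (A.mulVec u) ⬝ᵥ u = u ⬝ᵥ (A.mulVec u) := dotProduct_comm _ _
  simp only [dotProduct_add, dotProduct_sub, dotProduct_smul,
    smul_eq_mul, ht1, ht2]
  funext i
  simp only [Pi.sub_apply, Pi.add_apply, Pi.smul_apply, smul_eq_mul]
  have hR0 : R ≠ 0 := hrt0
  field_simp
  ring
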